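/- Let p be an odd prime and θ an integer such that 1 + θ² is not a square in ZMod p, and let (a_m)_{m=0,…,p} be the p+1 MUBs of ℂ^p (Fourier–Gauss bases and standard basis) and P_p the control-phase on ℂ^p ⊗ ℂ^p. Then for every μ ∈ ℤ/pℤ and every ν ∈ ℤ/pℤ with ν ≠ 0, each vector ψ = P_p^{θν}(a_μ^x ⊗ a_{μ+ν}^y) (x, y ∈ Fin p) is maximally entangled: its subsystem purity satisfies P(ψ) = 1/p. -/

import Mathlib

/-- `α_p = exp(2πi/p)`, the `p`-th root of unity. -/
noncomputable def rootOfUnity (p : ℕ) : ℂ := Complex.exp (2 * Real.pi * Complex.I / p)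

/-- The Fourier–Gauss vector `|j_m⟩` with components `p^{-1/2}·α_p^{js + ms²}`. -/
noncomputable def fourierGauss (p : ℕ) (j m : ℕ) : EuclideanSpace ℂ (Fin p) :=
  WithLp.toLp 2 (fun s : Fin p => (Real.sqrt p : ℂ)⁻¹ * rootOfUnity p ^ (j * (s : ℕ) + m * (s : ℕ) ^ 2))

/-- The product vector `(u ⊗ v)(a,b) = u(a)·v(b)`. -/
noncomputable def tens {p : ℕ} (u v : EuclideanSpace ℂ (Fin p)) :
    EuclideanSpace ℂ (Fin p × Fin p) :=
  WithLp.toLp 2 (fun ab : Fin p × Fin p => u ab.1 * v ab.2)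

/-- The control-phase `P_p`, the diagonal unitary with `P_p(|s⟩⊗|t⟩) = α_p^{st}|s⟩⊗|t⟩`. -/
noncomputable def cphase (p : ℕ) : Matrix (Fin p × Fin p) (Fin p × Fin p) ℂ :=
  Matrix.diagonal fun st : Fin p × Fin p => rootOfUnity p ^ ((st.1 : ℕ) * (st.2 : ℕ))

/-- The vectors `P_p^{θν} (a_μ^x ⊗ a_{μ+ν}^y)` of the generated bases (subscripts mod `p`). -/
noncomputable def cpVec (p : ℕ) (θ : ℤ) (μ ν : ZMod p) (x y : Fin p) :
    EuclideanSpace ℂ (Fin p × Fin p) :=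
  WithLp.toLp 2 ((cphase p ^ (((θ : ZMod p) * ν).val)).mulVec
    (tens (fourierGauss p (x : ℕ) μ.val) (fourierGauss p (y : ℕ) (μ.val + ν.val))))

/-- Purity of the reduced density operator on subsystem `A`. -/
noncomputable def purity {p : ℕ} (ψ : EuclideanSpace ℂ (Fin p × Fin p)) : ℝ :=
  ∑ a : Fin p, ∑ a' : Fin p,
    ‖∑ b : Fin p, ψ (a, b) * (starRingEnd ℂ) (ψ (a', b))‖ ^ 2

/-- Auxiliary computation: conjugate-product of monomials in a unit-norm `ω`. -/
lemma mul_conj_pow_aux (ω : ℂ) (hω0 : ω ≠ 0) (hc : (starRingEnd ℂ) ω = ω⁻¹)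
    (q : ℂ) (hq : (starRingEnd ℂ) q = q) (n n' : ℕ) (e f : ℤ)
    (hef : (n : ℤ) - n' = e + f) :
    (q * ω ^ n) * (starRingEnd ℂ) (q * ω ^ n') = q * q * (ω ^ e * ω ^ f) := by
  rw [map_mul, hq, map_pow, hc, inv_pow, ← zpow_natCast ω n, ← zpow_natCast ω n',
    ← zpow_neg, mul_mul_mul_comm, ← zpow_add₀ hω0, ← sub_eq_add_neg, hef,
    zpow_add₀ hω0]

/-- If `1 + θ²` is not a square mod the odd prime `p`, then for `ν ≠ 0` every vector
`P_p^{θν}(a_μ^x ⊗ a_{μ+ν}^y)` is maximally entangled: its subsystem purity is `1/p`. -/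
theorem cpVec_maximally_entangled (p : ℕ) (hp : p.Prime) (hodd : Odd p) (θ : ℤ)
    (hθ : ¬ ∃ x : ZMod p, x ^ 2 = 1 + (θ : ZMod p) ^ 2)
    (μ ν : ZMod p) (hν : ν ≠ 0) (x y : Fin p) :
    purity (cpVec p θ μ ν x y) = 1 / (p : ℝ) := by
  classical
  haveI : Fact p.Prime := ⟨hp⟩
  haveI : NeZero p := ⟨hp.ne_zero⟩
  set ω : ℂ := rootOfUnity p with hωdef
  have hprim : IsPrimitiveRoot ω p := Complex.isPrimitiveRoot_exp p hp.ne_zero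
  have hω0 : ω ≠ 0 := Complex.exp_ne_zero _
  have hnorm : ‖ω‖ = 1 := by
    rw [hωdef, rootOfUnity, Complex.norm_exp]
    have : (2 * (Real.pi:ℂ) * Complex.I / p).re = 0 := by
      simp [Complex.div_re]
    rw [this, Real.exp_zero]
  have hconj : (starRingEnd ℂ) ω = ω⁻¹ := (Complex.inv_eq_conj hnorm).symm
  set k : ℕ := ((θ : ZMod p) * ν).val with hkdef
  -- k is not divisible by p
  have hknd : ¬ (p : ℤ) ∣ (k : ℤ) := by
    have hθ0 : (θ : ZMod p) ≠ 0 := fun h => hθ ⟨1, by rw [h]; ring⟩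
    have hc : ((θ : ZMod p) * ν) ≠ 0 := mul_ne_zero hθ0 hν
    have hk0 : k ≠ 0 := fun h => hc (by rwa [← ZMod.val_eq_zero])
    have hklt : k < p := ZMod.val_lt _
    intro h
    rw [Int.natCast_dvd_natCast] at h
    exact hk0 (Nat.eq_zero_of_dvd_of_lt h hklt)
  -- component formula
  have hψ : ∀ a b : Fin p, cpVec p θ μ ν x y (a, b) = (p:ℂ)⁻¹ * ω ^
      (k * ((a:ℕ) * b) + ((x:ℕ) * a + μ.val * (a:ℕ)^2)
        + ((y:ℕ) * b + (μ.val + ν.val) * (b:ℕ)^2)) := by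
    intro a b
    have hs : ((Real.sqrt p : ℝ) : ℂ)⁻¹ * ((Real.sqrt p : ℝ) : ℂ)⁻¹ = (p:ℂ)⁻¹ := by
      rw [← mul_inv, ← Complex.ofReal_mul, Real.mul_self_sqrt (by positivity)]
      rw [Complex.ofReal_natCast]
    simp only [cpVec, cphase, Matrix.diagonal_pow, Matrix.mulVec_diagonal, tens, fourierGauss,
      Pi.pow_apply, ← hωdef, ← hkdef, PiLp.toLp_apply, WithLp.ofLp_toLp]
    rw [← pow_mul, mul_comm ((a:ℕ) * (b:ℕ))]
    rw [pow_add, pow_add]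
    ring_nf
    rw [← hs]
    ring
  -- the inner sum
  have key : ∀ a a' : Fin p,
      (∑ b : Fin p, cpVec p θ μ ν x y (a, b) * (starRingEnd ℂ) (cpVec p θ μ ν x y (a', b)))
        = if a = a' then (p:ℂ)⁻¹ else 0 := by
    intro a a'
    set A : ℤ := ((a:ℕ) : ℤ) with hA
    set A' : ℤ := ((a':ℕ) : ℤ) with hA'
    set E : ℤ := (x:ℕ) * (A - A') + (μ.val : ℤ) * (A^2 - A'^2) with hE
    set z : ℂ := ω ^ ((k : ℤ) * (A - A')) with hz
    have hterm : ∀ b : Fin p,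
        cpVec p θ μ ν x y (a, b) * (starRingEnd ℂ) (cpVec p θ μ ν x y (a', b))
          = (p:ℂ)⁻¹ * (p:ℂ)⁻¹ * ω ^ E * z ^ (b:ℕ) := by
      intro b
      rw [hψ a b, hψ a' b,
        mul_conj_pow_aux ω hω0 hconj _ (by simp) _ _ E ((k : ℤ) * (A - A') * ((b:ℕ):ℤ))
          (by rw [hE, hA, hA']; push_cast; ring)]
      rw [hz, ← zpow_natCast (ω ^ ((k:ℤ) * (A - A'))) (b:ℕ), ← zpow_mul]
      ring
    rw [Finset.sum_congr rfl fun b _ => hterm b, ← Finset.mul_sum]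
    by_cases haa : a = a'
    · subst haa
      rw [if_pos rfl]
      have hz1 : z = 1 := by rw [hz, hA, hA', sub_self, mul_zero, zpow_zero]
      have hE0 : E = 0 := by rw [hE, hA, hA']; ring
      rw [hz1, hE0, zpow_zero, mul_one]
      simp only [one_pow, Finset.sum_const, Finset.card_univ, Fintype.card_fin, nsmul_eq_mul,
        mul_one]
      have hpC : (p:ℂ) ≠ 0 := by exact_mod_cast hp.ne_zero
      field_simp

    · simp only [if_neg haa]
      have hndvd : ¬ (p : ℤ) ∣ (k : ℤ) * (A - A') := by
        intro h
        rcases (Nat.prime_iff_prime_int.mp hp).dvd_mul.mp h with h1 | h1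
        · exact hknd h1
        · have hb1 : A - A' = 0 := by
            refine Int.eq_zero_of_abs_lt_dvd h1 ?_
            rw [hA, hA']
            have := a.isLt
            have := a'.isLt
            rw [abs_sub_lt_iff]
            omega
          apply haa
          have : (a:ℕ) = (a':ℕ) := by omega
          exact Fin.ext this
      have hz1 : z ≠ 1 := by
        rw [hz, Ne, hprim.zpow_eq_one_iff_dvd]
        exact hndvd
      have hsum : (∑ b : Fin p, z ^ (b:ℕ)) = 0 := by
        rw [Fin.sum_univ_eq_sum_range (fun i => z ^ i) p, geom_sum_eq hz1]
        have hzp : z ^ p = 1 := by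
          rw [hz, ← zpow_natCast (ω ^ ((k:ℤ) * (A - A'))) p, ← zpow_mul,
            mul_comm, zpow_mul, zpow_natCast, hprim.pow_eq_one, one_zpow]
        rw [hzp, sub_self, zero_div]
      rw [hsum, mul_zero]
  -- conclude
  unfold purity
  have habs : ∀ a a' : Fin p,
      ‖(∑ b : Fin p, cpVec p θ μ ν x y (a, b) *
        (starRingEnd ℂ) (cpVec p θ μ ν x y (a', b)))‖ ^ 2
      = if a = a' then ((p:ℝ)⁻¹)^2 else 0 := by
    intro a a'
    rw [key a a']
    split
    · rw [norm_inv, Complex.norm_natCast]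
    · simp
  rw [Finset.sum_congr rfl fun a _ => Finset.sum_congr rfl fun a' _ => habs a a']
  simp only [Finset.sum_ite_eq, Finset.mem_univ, if_pos, Finset.sum_const, Finset.card_univ,
    Fintype.card_fin, nsmul_eq_mul]
  have hp0 : (p:ℝ) ≠ 0 := by exact_mod_cast hp.ne_zero
  field_simp
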